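/- Define S_{N,r}(x,y) = 4(r−2)(N+r)x + (r−2)(r−3)x² − (N+r)(7r−17−N)y. Let r ≥ 3 and let N be an integer with 2 ≤ N ≤ 4(r − 9/8)². Then for every one-loop fixed point λ on ℝ^N one has S_{N,r}(a₀(λ), ‖λ‖²) ≤ S_{N,r}(ρ_N⁺, 3N(N+2)/(N+8)²), where ρ_N⁺ = N(N+2)/(N+8); i.e. the average of the squared one-loop anomalous dimensions of rank-r composite operators is maximized by the O(N) fixed point. -/

import Mathlib

/-- A quartic coupling on `ℝ^N`: a rank-4 tensor invariant under all
permutations of its four indices. -/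
def IsSym4 {N : ℕ} (A : (Fin 4 → Fin N) → ℝ) : Prop :=
  ∀ (σ : Equiv.Perm (Fin 4)) (f : Fin 4 → Fin N), A (f ∘ σ) = A f

/-- The one-loop fixed point equation
`λ_{ijkl} = ∑_{m,n} (λ_{ijmn}λ_{klmn} + λ_{ikmn}λ_{jlmn} + λ_{ilmn}λ_{jkmn})`. -/
def IsFixedPoint {N : ℕ} (A : (Fin 4 → Fin N) → ℝ) : Prop :=
  ∀ i j k l : Fin N, A ![i, j, k, l] =
    ∑ m : Fin N, ∑ n : Fin N,
      (A ![i, j, m, n] * A ![k, l, m, n] + A ![i, k, m, n] * A ![j, l, m, n]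
        + A ![i, l, m, n] * A ![j, k, m, n])

/-- `‖λ‖² = ∑_{i,j,k,l} λ_{ijkl}²`. -/
def sqnorm {N : ℕ} (A : (Fin 4 → Fin N) → ℝ) : ℝ :=
  ∑ i : Fin N, ∑ j : Fin N, ∑ k : Fin N, ∑ l : Fin N, (A ![i, j, k, l]) ^ 2

/-- `a₀(λ) = ∑_{i,j} λ_{iijj}`. -/
def a0 {N : ℕ} (A : (Fin 4 → Fin N) → ℝ) : ℝ :=
  ∑ i : Fin N, ∑ j : Fin N, A ![i, i, j, j]

/-- `t_{ij}(λ) = ∑_k λ_{ijkk}`. -/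
def tmat {N : ℕ} (A : (Fin 4 → Fin N) → ℝ) (i j : Fin N) : ℝ :=
  ∑ k : Fin N, A ![i, j, k, k]

/-- `S_{N,r}(x,y) = 4(r−2)(N+r)x + (r−2)(r−3)x² − (N+r)(7r−17−N)y`. -/
def Sfun (N r : ℕ) (x y : ℝ) : ℝ :=
  4 * ((r : ℝ) - 2) * ((N : ℝ) + r) * x + ((r : ℝ) - 2) * ((r : ℝ) - 3) * x ^ 2
    - ((N : ℝ) + r) * (7 * (r : ℝ) - 17 - (N : ℝ)) * y

namespace SfunAux
variable {N : ℕ} {A : (Fin 4 → Fin N) → ℝ}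

lemma sw01 (hA : IsSym4 A) (a b c d : Fin N) : A ![a,b,c,d] = A ![b,a,c,d] := by
  have h := hA (Equiv.swap 0 1) ![a,b,c,d]
  have e : (![a,b,c,d] : Fin 4 → Fin N) ∘ (Equiv.swap 0 1) = ![b,a,c,d] := by
    funext i; fin_cases i <;> simp [Equiv.swap_apply_def]
  rw [e] at h; exact h.symm

lemma sw12 (hA : IsSym4 A) (a b c d : Fin N) : A ![a,b,c,d] = A ![a,c,b,d] := by
  have h := hA (Equiv.swap 1 2) ![a,b,c,d]
  have e : (![a,b,c,d] : Fin 4 → Fin N) ∘ (Equiv.swap 1 2) = ![a,c,b,d] := by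
    funext i; fin_cases i <;> simp [Equiv.swap_apply_def]
  rw [e] at h; exact h.symm

lemma sw23 (hA : IsSym4 A) (a b c d : Fin N) : A ![a,b,c,d] = A ![a,b,d,c] := by
  have h := hA (Equiv.swap 2 3) ![a,b,c,d]
  have e : (![a,b,c,d] : Fin 4 → Fin N) ∘ (Equiv.swap 2 3) = ![a,b,d,c] := by
    funext i; fin_cases i <;> simp [Equiv.swap_apply_def]
  rw [e] at h; exact h.symm

lemma pair_sw (hA : IsSym4 A) (a b c d : Fin N) : A ![a,b,c,d] = A ![c,d,a,b] :=
  (sw12 hA a b c d).trans ((sw01 hA a c b d).trans ((sw23 hA c a b d).trans (sw12 hA c a d b)))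

lemma permB2 (hA : IsSym4 A) (i j l : Fin N) : A ![i,j,i,l] = A ![j,l,i,i] :=
  (sw01 hA i j i l).trans ((sw23 hA j i i l).trans (sw12 hA j i l i))

lemma permB3 (hA : IsSym4 A) (i j k : Fin N) : A ![i,j,k,i] = A ![j,k,i,i] :=
  (sw01 hA i j k i).trans (sw12 hA j i k i)

lemma tmat_symm (hA : IsSym4 A) (a b : Fin N) : tmat A a b = tmat A b a :=
  Finset.sum_congr rfl fun k _ => sw01 hA a b k k

lemma sum_rot3 (f : Fin N → Fin N → Fin N → ℝ) :
    (∑ i, ∑ k, ∑ l, f i k l) = ∑ k, ∑ l, ∑ i, f i k l := by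
  have h1 : (∑ i, ∑ k, ∑ l, f i k l) = ∑ k, ∑ i, ∑ l, f i k l := Finset.sum_comm
  rw [h1]; exact Finset.sum_congr rfl fun k _ => Finset.sum_comm

lemma sum_jin (f : Fin N → Fin N → Fin N → Fin N → ℝ) :
    (∑ i, ∑ j, ∑ k, ∑ l, f i j k l) = ∑ i, ∑ k, ∑ l, ∑ j, f i j k l :=
  Finset.sum_congr rfl fun i _ => sum_rot3 (fun j k l => f i j k l)

lemma sum_kin (f : Fin N → Fin N → Fin N → Fin N → ℝ) :
    (∑ i, ∑ j, ∑ k, ∑ l, f i j k l) = ∑ i, ∑ j, ∑ l, ∑ k, f i j k l :=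
  Finset.sum_congr rfl fun i _ => Finset.sum_congr rfl fun _ _ => Finset.sum_comm

lemma comm4 (f : Fin N → Fin N → Fin N → Fin N → ℝ) :
    (∑ i, ∑ j, ∑ k, ∑ l, f i j k l) = ∑ k, ∑ l, ∑ i, ∑ j, f i j k l := by
  have h1 : (∑ i, ∑ j, ∑ k, ∑ l, f i j k l) = ∑ i, ∑ k, ∑ j, ∑ l, f i j k l :=
    Finset.sum_congr rfl fun i _ => Finset.sum_comm
  have h2 : (∑ i : Fin N, ∑ k : Fin N, ∑ j : Fin N, ∑ l : Fin N, f i j k l)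
      = ∑ k, ∑ i, ∑ j, ∑ l, f i j k l := Finset.sum_comm
  have h3 : (∑ k : Fin N, ∑ i : Fin N, ∑ j : Fin N, ∑ l : Fin N, f i j k l)
      = ∑ k, ∑ i, ∑ l, ∑ j, f i j k l :=
    Finset.sum_congr rfl fun k _ => Finset.sum_congr rfl fun i _ => Finset.sum_comm
  have h4 : (∑ k : Fin N, ∑ i : Fin N, ∑ l : Fin N, ∑ j : Fin N, f i j k l)
      = ∑ k, ∑ l, ∑ i, ∑ j, f i j k l :=
    Finset.sum_congr rfl fun k _ => Finset.sum_comm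
  rw [h1, h2, h3, h4]

lemma ET1 (hA : IsSym4 A) :
    (∑ i : Fin N, ∑ j : Fin N, ∑ k : Fin N, ∑ l : Fin N,
        (if i = j then tmat A k l else 0) * A ![i,j,k,l])
      = ∑ i, ∑ j, (tmat A i j)^2 := by
  calc (∑ i : Fin N, ∑ j : Fin N, ∑ k : Fin N, ∑ l : Fin N,
        (if i = j then tmat A k l else 0) * A ![i,j,k,l])
      = ∑ i : Fin N, ∑ k : Fin N, ∑ l : Fin N, ∑ j : Fin N,
          (if i = j then tmat A k l else 0) * A ![i,j,k,l] := sum_jin _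
    _ = ∑ i, ∑ k, ∑ l, tmat A k l * A ![i,i,k,l] := by
        refine Finset.sum_congr rfl fun i _ => Finset.sum_congr rfl fun k _ =>
          Finset.sum_congr rfl fun l _ => ?_
        simp
    _ = ∑ i, ∑ k, ∑ l, tmat A k l * A ![k,l,i,i] := by
        refine Finset.sum_congr rfl fun i _ => Finset.sum_congr rfl fun k _ =>
          Finset.sum_congr rfl fun l _ => ?_
        rw [pair_sw hA]
    _ = ∑ k, ∑ l, ∑ i, tmat A k l * A ![k,l,i,i] := sum_rot3 _
    _ = ∑ k, ∑ l, (tmat A k l)^2 := by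
        refine Finset.sum_congr rfl fun k _ => Finset.sum_congr rfl fun l _ => ?_
        rw [← Finset.mul_sum, sq, tmat]

lemma ET2 (hA : IsSym4 A) :
    (∑ i : Fin N, ∑ j : Fin N, ∑ k : Fin N, ∑ l : Fin N,
        (if i = k then tmat A j l else 0) * A ![i,j,k,l])
      = ∑ i, ∑ j, (tmat A i j)^2 := by
  calc (∑ i : Fin N, ∑ j : Fin N, ∑ k : Fin N, ∑ l : Fin N,
        (if i = k then tmat A j l else 0) * A ![i,j,k,l])
      = ∑ i : Fin N, ∑ j : Fin N, ∑ l : Fin N, ∑ k : Fin N,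
          (if i = k then tmat A j l else 0) * A ![i,j,k,l] := sum_kin _
    _ = ∑ i, ∑ j, ∑ l, tmat A j l * A ![i,j,i,l] := by
        refine Finset.sum_congr rfl fun i _ => Finset.sum_congr rfl fun j _ =>
          Finset.sum_congr rfl fun l _ => ?_
        simp
    _ = ∑ i, ∑ j, ∑ l, tmat A j l * A ![j,l,i,i] := by
        refine Finset.sum_congr rfl fun i _ => Finset.sum_congr rfl fun j _ =>
          Finset.sum_congr rfl fun l _ => ?_
        rw [permB2 hA]
    _ = ∑ j, ∑ l, ∑ i, tmat A j l * A ![j,l,i,i] := sum_rot3 _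
    _ = ∑ j, ∑ l, (tmat A j l)^2 := by
        refine Finset.sum_congr rfl fun j _ => Finset.sum_congr rfl fun l _ => ?_
        rw [← Finset.mul_sum, sq, tmat]

lemma ET3 (hA : IsSym4 A) :
    (∑ i : Fin N, ∑ j : Fin N, ∑ k : Fin N, ∑ l : Fin N,
        (if i = l then tmat A j k else 0) * A ![i,j,k,l])
      = ∑ i, ∑ j, (tmat A i j)^2 := by
  calc (∑ i : Fin N, ∑ j : Fin N, ∑ k : Fin N, ∑ l : Fin N,
        (if i = l then tmat A j k else 0) * A ![i,j,k,l])
      = ∑ i, ∑ j, ∑ k, tmat A j k * A ![i,j,k,i] := by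
        refine Finset.sum_congr rfl fun i _ => Finset.sum_congr rfl fun j _ =>
          Finset.sum_congr rfl fun k _ => ?_
        simp
    _ = ∑ i, ∑ j, ∑ k, tmat A j k * A ![j,k,i,i] := by
        refine Finset.sum_congr rfl fun i _ => Finset.sum_congr rfl fun j _ =>
          Finset.sum_congr rfl fun k _ => ?_
        rw [permB3 hA]
    _ = ∑ j, ∑ k, ∑ i, tmat A j k * A ![j,k,i,i] := sum_rot3 _
    _ = ∑ j, ∑ k, (tmat A j k)^2 := by
        refine Finset.sum_congr rfl fun j _ => Finset.sum_congr rfl fun k _ => ?_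
        rw [← Finset.mul_sum, sq, tmat]

lemma EU1 :
    (∑ i : Fin N, ∑ j : Fin N, ∑ k : Fin N, ∑ l : Fin N,
        (if i = j then tmat A k l else 0) * (if i = j then tmat A k l else 0))
      = (N:ℝ) * ∑ i, ∑ j, (tmat A i j)^2 := by
  calc (∑ i : Fin N, ∑ j : Fin N, ∑ k : Fin N, ∑ l : Fin N,
        (if i = j then tmat A k l else 0) * (if i = j then tmat A k l else 0))
      = ∑ i : Fin N, ∑ k : Fin N, ∑ l : Fin N, ∑ j : Fin N,
          (if i = j then tmat A k l else 0) * (if i = j then tmat A k l else 0) := sum_jin _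
    _ = ∑ _i : Fin N, ∑ k, ∑ l, (tmat A k l)^2 := by
        refine Finset.sum_congr rfl fun i _ => Finset.sum_congr rfl fun k _ =>
          Finset.sum_congr rfl fun l _ => ?_
        have h : ∀ j : Fin N, (if i = j then tmat A k l else 0) * (if i = j then tmat A k l else 0)
            = if i = j then (tmat A k l)^2 else 0 := fun j => by split <;> simp [sq]
        simp [h]
    _ = (N:ℝ) * ∑ k, ∑ l, (tmat A k l)^2 := by
        rw [Finset.sum_const, Finset.card_univ, Fintype.card_fin, nsmul_eq_mul]

lemma EU2 :
    (∑ i : Fin N, ∑ j : Fin N, ∑ k : Fin N, ∑ l : Fin N,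
        (if i = k then tmat A j l else 0) * (if i = k then tmat A j l else 0))
      = (N:ℝ) * ∑ i, ∑ j, (tmat A i j)^2 := by
  calc (∑ i : Fin N, ∑ j : Fin N, ∑ k : Fin N, ∑ l : Fin N,
        (if i = k then tmat A j l else 0) * (if i = k then tmat A j l else 0))
      = ∑ i : Fin N, ∑ j : Fin N, ∑ l : Fin N, ∑ k : Fin N,
          (if i = k then tmat A j l else 0) * (if i = k then tmat A j l else 0) := sum_kin _
    _ = ∑ _i : Fin N, ∑ j, ∑ l, (tmat A j l)^2 := by
        refine Finset.sum_congr rfl fun i _ => Finset.sum_congr rfl fun j _ =>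
          Finset.sum_congr rfl fun l _ => ?_
        have h : ∀ k : Fin N, (if i = k then tmat A j l else 0) * (if i = k then tmat A j l else 0)
            = if i = k then (tmat A j l)^2 else 0 := fun k => by split <;> simp [sq]
        simp [h]
    _ = (N:ℝ) * ∑ j, ∑ l, (tmat A j l)^2 := by
        rw [Finset.sum_const, Finset.card_univ, Fintype.card_fin, nsmul_eq_mul]

lemma EU3 :
    (∑ i : Fin N, ∑ j : Fin N, ∑ k : Fin N, ∑ l : Fin N,
        (if i = l then tmat A j k else 0) * (if i = l then tmat A j k else 0))
      = (N:ℝ) * ∑ i, ∑ j, (tmat A i j)^2 := by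
  calc (∑ i : Fin N, ∑ j : Fin N, ∑ k : Fin N, ∑ l : Fin N,
        (if i = l then tmat A j k else 0) * (if i = l then tmat A j k else 0))
      = ∑ _i : Fin N, ∑ j, ∑ k, (tmat A j k)^2 := by
        refine Finset.sum_congr rfl fun i _ => Finset.sum_congr rfl fun j _ =>
          Finset.sum_congr rfl fun k _ => ?_
        have h : ∀ l : Fin N, (if i = l then tmat A j k else 0) * (if i = l then tmat A j k else 0)
            = if i = l then (tmat A j k)^2 else 0 := fun l => by split <;> simp [sq]
        simp [h]
    _ = (N:ℝ) * ∑ j, ∑ k, (tmat A j k)^2 := by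
        rw [Finset.sum_const, Finset.card_univ, Fintype.card_fin, nsmul_eq_mul]

lemma EV12 :
    (∑ i : Fin N, ∑ j : Fin N, ∑ k : Fin N, ∑ l : Fin N,
        (if i = j then tmat A k l else 0) * (if i = k then tmat A j l else 0))
      = ∑ i, ∑ j, (tmat A i j)^2 := by
  calc (∑ i : Fin N, ∑ j : Fin N, ∑ k : Fin N, ∑ l : Fin N,
        (if i = j then tmat A k l else 0) * (if i = k then tmat A j l else 0))
      = ∑ i : Fin N, ∑ k : Fin N, ∑ l : Fin N, ∑ j : Fin N,
          (if i = j then tmat A k l else 0) * (if i = k then tmat A j l else 0) := sum_jin _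
    _ = ∑ i, ∑ k, ∑ l, (tmat A k l) * (if i = k then tmat A i l else 0) := by
        refine Finset.sum_congr rfl fun i _ => Finset.sum_congr rfl fun k _ =>
          Finset.sum_congr rfl fun l _ => ?_
        have h : ∀ j : Fin N, (if i = j then tmat A k l else 0) * (if i = k then tmat A j l else 0)
            = if i = j then tmat A k l * (if i = k then tmat A j l else 0) else 0 := fun j => by
          split <;> simp
        simp [h]
    _ = ∑ i, ∑ l, ∑ k, (tmat A k l) * (if i = k then tmat A i l else 0) :=
        Finset.sum_congr rfl fun i _ => Finset.sum_comm
    _ = ∑ i, ∑ l, (tmat A i l) * (tmat A i l) := by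
        refine Finset.sum_congr rfl fun i _ => Finset.sum_congr rfl fun l _ => ?_
        have h : ∀ k : Fin N, tmat A k l * (if i = k then tmat A i l else 0)
            = if i = k then tmat A k l * tmat A i l else 0 := fun k => by split <;> simp
        simp [h]
    _ = ∑ i, ∑ l, (tmat A i l)^2 :=
        Finset.sum_congr rfl fun i _ => Finset.sum_congr rfl fun l _ => (sq _).symm

lemma EV13 (hA : IsSym4 A) :
    (∑ i : Fin N, ∑ j : Fin N, ∑ k : Fin N, ∑ l : Fin N,
        (if i = j then tmat A k l else 0) * (if i = l then tmat A j k else 0))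
      = ∑ i, ∑ j, (tmat A i j)^2 := by
  calc (∑ i : Fin N, ∑ j : Fin N, ∑ k : Fin N, ∑ l : Fin N,
        (if i = j then tmat A k l else 0) * (if i = l then tmat A j k else 0))
      = ∑ i : Fin N, ∑ k : Fin N, ∑ l : Fin N, ∑ j : Fin N,
          (if i = j then tmat A k l else 0) * (if i = l then tmat A j k else 0) := sum_jin _
    _ = ∑ i, ∑ k, ∑ l, (tmat A k l) * (if i = l then tmat A i k else 0) := by
        refine Finset.sum_congr rfl fun i _ => Finset.sum_congr rfl fun k _ =>
          Finset.sum_congr rfl fun l _ => ?_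
        have h : ∀ j : Fin N, (if i = j then tmat A k l else 0) * (if i = l then tmat A j k else 0)
            = if i = j then tmat A k l * (if i = l then tmat A j k else 0) else 0 := fun j => by
          split <;> simp
        simp [h]
    _ = ∑ i, ∑ k, (tmat A k i) * (tmat A i k) := by
        refine Finset.sum_congr rfl fun i _ => Finset.sum_congr rfl fun k _ => ?_
        have h : ∀ l : Fin N, tmat A k l * (if i = l then tmat A i k else 0)
            = if i = l then tmat A k l * tmat A i k else 0 := fun l => by split <;> simp
        simp [h]
    _ = ∑ i, ∑ k, (tmat A i k)^2 := by
        refine Finset.sum_congr rfl fun i _ => Finset.sum_congr rfl fun k _ => ?_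
        rw [tmat_symm hA k i, sq]

lemma EV23 :
    (∑ i : Fin N, ∑ j : Fin N, ∑ k : Fin N, ∑ l : Fin N,
        (if i = k then tmat A j l else 0) * (if i = l then tmat A j k else 0))
      = ∑ i, ∑ j, (tmat A i j)^2 := by
  calc (∑ i : Fin N, ∑ j : Fin N, ∑ k : Fin N, ∑ l : Fin N,
        (if i = k then tmat A j l else 0) * (if i = l then tmat A j k else 0))
      = ∑ i : Fin N, ∑ j : Fin N, ∑ l : Fin N, ∑ k : Fin N,
          (if i = k then tmat A j l else 0) * (if i = l then tmat A j k else 0) := sum_kin _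
    _ = ∑ i, ∑ j, ∑ l, (tmat A j l) * (if i = l then tmat A j i else 0) := by
        refine Finset.sum_congr rfl fun i _ => Finset.sum_congr rfl fun j _ =>
          Finset.sum_congr rfl fun l _ => ?_
        have h : ∀ k : Fin N, (if i = k then tmat A j l else 0) * (if i = l then tmat A j k else 0)
            = if i = k then tmat A j l * (if i = l then tmat A j k else 0) else 0 := fun k => by
          split <;> simp
        simp [h]
    _ = ∑ i, ∑ j, (tmat A j i) * (tmat A j i) := by
        refine Finset.sum_congr rfl fun i _ => Finset.sum_congr rfl fun j _ => ?_
        have h : ∀ l : Fin N, tmat A j l * (if i = l then tmat A j i else 0)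
            = if i = l then tmat A j l * tmat A j i else 0 := fun l => by split <;> simp
        simp [h]
    _ = ∑ i, ∑ j, (tmat A j i)^2 :=
        Finset.sum_congr rfl fun i _ => Finset.sum_congr rfl fun j _ => (sq _).symm
    _ = ∑ j, ∑ i, (tmat A j i)^2 := Finset.sum_comm

/-- Contracting the fixed point equation: `a₀ = ‖t‖² + 2‖λ‖²`. -/
lemma trace_identity (hA : IsSym4 A) (hfp : IsFixedPoint A) :
    a0 A = (∑ i, ∑ j, (tmat A i j)^2) + 2 * sqnorm A := by
  have h0 : a0 A = ∑ i : Fin N, ∑ j : Fin N, ∑ m : Fin N, ∑ n : Fin N,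
      (A ![i,i,m,n] * A ![j,j,m,n] + A ![i,j,m,n] * A ![i,j,m,n]
        + A ![i,j,m,n] * A ![i,j,m,n]) := by
    rw [a0]
    exact Finset.sum_congr rfl fun i _ => Finset.sum_congr rfl fun j _ => hfp i i j j
  have h1 : a0 A = (∑ i : Fin N, ∑ j : Fin N, ∑ m : Fin N, ∑ n : Fin N,
        A ![i,i,m,n] * A ![j,j,m,n])
      + (∑ i : Fin N, ∑ j : Fin N, ∑ m : Fin N, ∑ n : Fin N, A ![i,j,m,n] * A ![i,j,m,n])
      + (∑ i : Fin N, ∑ j : Fin N, ∑ m : Fin N, ∑ n : Fin N, A ![i,j,m,n] * A ![i,j,m,n]) := by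
    rw [h0]; simp only [Finset.sum_add_distrib]
  have e1 : (∑ i : Fin N, ∑ j : Fin N, ∑ m : Fin N, ∑ n : Fin N, A ![i,i,m,n] * A ![j,j,m,n])
      = ∑ i, ∑ j, (tmat A i j)^2 := by
    calc (∑ i : Fin N, ∑ j : Fin N, ∑ m : Fin N, ∑ n : Fin N, A ![i,i,m,n] * A ![j,j,m,n])
        = ∑ m : Fin N, ∑ n : Fin N, ∑ i : Fin N, ∑ j : Fin N, A ![i,i,m,n] * A ![j,j,m,n] :=
          comm4 _
      _ = ∑ m : Fin N, ∑ n : Fin N, ∑ i : Fin N, ∑ j : Fin N, A ![m,n,i,i] * A ![m,n,j,j] := by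
          refine Finset.sum_congr rfl fun m _ => Finset.sum_congr rfl fun n _ =>
            Finset.sum_congr rfl fun i _ => Finset.sum_congr rfl fun j _ => ?_
          rw [pair_sw hA i i m n, pair_sw hA j j m n]
      _ = ∑ m : Fin N, ∑ n : Fin N, (tmat A m n) * (tmat A m n) := by
          refine Finset.sum_congr rfl fun m _ => Finset.sum_congr rfl fun n _ => ?_
          rw [← Finset.sum_mul_sum]
          rw [tmat]
      _ = ∑ m, ∑ n, (tmat A m n)^2 :=
          Finset.sum_congr rfl fun m _ => Finset.sum_congr rfl fun n _ => (sq _).symm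
  have e2 : (∑ i : Fin N, ∑ j : Fin N, ∑ m : Fin N, ∑ n : Fin N, A ![i,j,m,n] * A ![i,j,m,n])
      = sqnorm A := by
    rw [sqnorm]
    exact Finset.sum_congr rfl fun i _ => Finset.sum_congr rfl fun j _ =>
      Finset.sum_congr rfl fun m _ => Finset.sum_congr rfl fun n _ => (sq _).symm
  rw [h1, e1, e2]; ring

/-- `3‖t‖² ≤ (N+2)‖λ‖²`. -/
lemma trace_bound (hA : IsSym4 A) :
    3 * (∑ i, ∑ j, (tmat A i j)^2) ≤ ((N:ℝ) + 2) * sqnorm A := by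
  set s : ℝ := ∑ i, ∑ j, (tmat A i j)^2 with hs
  set c : ℝ := (N:ℝ) + 2 with hc
  have hcpos : 0 < c := by positivity
  have hnn : (0:ℝ) ≤ ∑ i : Fin N, ∑ j : Fin N, ∑ k : Fin N, ∑ l : Fin N,
      (c * A ![i,j,k,l] - ((if i = j then tmat A k l else 0) + (if i = k then tmat A j l else 0)
        + (if i = l then tmat A j k else 0)))^2 :=
    Finset.sum_nonneg fun i _ => Finset.sum_nonneg fun j _ => Finset.sum_nonneg fun k _ =>
      Finset.sum_nonneg fun l _ => sq_nonneg _
  have hpt : ∀ i j k l : Fin N,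
      (c * A ![i,j,k,l] - ((if i = j then tmat A k l else 0) + (if i = k then tmat A j l else 0)
        + (if i = l then tmat A j k else 0)))^2
      = c^2 * (A ![i,j,k,l])^2
        - (2*c) * ((if i = j then tmat A k l else 0) * A ![i,j,k,l])
        - (2*c) * ((if i = k then tmat A j l else 0) * A ![i,j,k,l])
        - (2*c) * ((if i = l then tmat A j k else 0) * A ![i,j,k,l])
        + (if i = j then tmat A k l else 0) * (if i = j then tmat A k l else 0)
        + (if i = k then tmat A j l else 0) * (if i = k then tmat A j l else 0)
        + (if i = l then tmat A j k else 0) * (if i = l then tmat A j k else 0)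
        + 2 * ((if i = j then tmat A k l else 0) * (if i = k then tmat A j l else 0))
        + 2 * ((if i = j then tmat A k l else 0) * (if i = l then tmat A j k else 0))
        + 2 * ((if i = k then tmat A j l else 0) * (if i = l then tmat A j k else 0)) := by
    intro i j k l; ring
  have hexp : (∑ i : Fin N, ∑ j : Fin N, ∑ k : Fin N, ∑ l : Fin N,
      (c * A ![i,j,k,l] - ((if i = j then tmat A k l else 0) + (if i = k then tmat A j l else 0)
        + (if i = l then tmat A j k else 0)))^2)
      = c^2 * sqnorm A - (2*c) * s - (2*c) * s - (2*c) * s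
        + (N:ℝ) * s + (N:ℝ) * s + (N:ℝ) * s + 2 * s + 2 * s + 2 * s := by
    simp only [hpt]
    simp only [Finset.sum_add_distrib, Finset.sum_sub_distrib, ← Finset.mul_sum]
    rw [ET1 hA, ET2 hA, ET3 hA, EU1, EU2, EU3, EV12, EV13 hA, EV23, ← hs]
    rw [sqnorm]
  rw [hexp] at hnn
  have h2 : 0 ≤ c * (c * sqnorm A - 3 * s) := by
    have h3 : c^2 * sqnorm A - (2*c) * s - (2*c) * s - (2*c) * s
        + (N:ℝ) * s + (N:ℝ) * s + (N:ℝ) * s + 2 * s + 2 * s + 2 * s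
        = c * (c * sqnorm A - 3 * s) := by rw [hc]; ring
    linarith [hnn, h3.le, h3.ge]
  nlinarith [h2, hcpos]

/-- Cauchy–Schwarz: `a₀² ≤ N‖t‖²`. -/
lemma cs_bound : (a0 A)^2 ≤ (N:ℝ) * ∑ i, ∑ j, (tmat A i j)^2 := by
  have hdiag : a0 A = ∑ i, tmat A i i := rfl
  have h1 : (∑ i, tmat A i i)^2 ≤ (∑ _i : Fin N, (1:ℝ)^2) * ∑ i, (tmat A i i)^2 := by
    have h := Finset.sum_mul_sq_le_sq_mul_sq Finset.univ (fun _ => (1:ℝ)) (fun i => tmat A i i)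
    simpa using h
  have h2 : (∑ _i : Fin N, (1:ℝ)^2) = (N:ℝ) := by simp
  have h3 : (∑ i, (tmat A i i)^2) ≤ ∑ i, ∑ j, (tmat A i j)^2 :=
    Finset.sum_le_sum fun i _ =>
      Finset.single_le_sum (f := fun j => (tmat A i j)^2) (fun j _ => sq_nonneg _)
        (Finset.mem_univ i)
  rw [hdiag]
  calc (∑ i, tmat A i i)^2 ≤ (∑ _i : Fin N, (1:ℝ)^2) * ∑ i, (tmat A i i)^2 := h1
    _ = (N:ℝ) * ∑ i, (tmat A i i)^2 := by rw [h2]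
    _ ≤ (N:ℝ) * ∑ i, ∑ j, (tmat A i j)^2 :=
        mul_le_mul_of_nonneg_left h3 (by positivity)

lemma cancel {M T : ℝ} (hM : 0 < M) (h : 0 ≤ M * T) : 0 ≤ T := by
  by_contra hT; push_neg at hT; nlinarith

lemma Fnn (n r : ℝ) (hn2 : 2 ≤ n) (hr : 3 ≤ r) (hnr : n ≤ 4*(r - 9/8)^2) :
    0 ≤ -n^3 + (4*r^2-6*r-5)*n^2 + (23*r^2-33*r-12)*n + (36*r^2 - 60*r) := by
  have hn0 : (0:ℝ) < n := by linarith
  have hg2 : 0 ≤ 4*(r-9/8)^2 - n := by linarith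
  have hr3 : (0:ℝ) ≤ r - 3 := by linarith
  rcases le_or_gt r (161/48) with hsmall | hbig
  · have hpsi : 0 ≤ 12*r^3 - (177/4)*r^2 + (291/4)*r - 16113/256 := by
      nlinarith [mul_nonneg (mul_nonneg hr3 hr3) hr3, mul_nonneg hr3 hr3, hr3]
    have e1 : 0 ≤ (4*(r-9/8)^2 - n)*n^2 := mul_nonneg hg2 (sq_nonneg n)
    have e2 : 0 ≤ (161/16 - 3*r)*((4*(r-9/8)^2 - n)*n) :=
      mul_nonneg (by linarith) (mul_nonneg hg2 hn0.le)
    have e3 : 0 ≤ n*(12*r^3 - (177/4)*r^2 + (291/4)*r - 16113/256) := mul_nonneg hn0.le hpsi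
    have e4 : (0:ℝ) ≤ 36*r^2 - 60*r := by nlinarith
    nlinarith [e1, e2, e3, e4]
  · have e1 : 0 ≤ (4*(r-9/8)^2 - n)*n^2 := mul_nonneg hg2 (sq_nonneg n)
    have e2 : 0 ≤ (3*r - 161/16)*n^2 := mul_nonneg (by linarith) (sq_nonneg n)
    have e3 : 0 ≤ (23*r^2-33*r-12)*n := mul_nonneg (by nlinarith) hn0.le
    have e4 : (0:ℝ) ≤ 36*r^2 - 60*r := by nlinarith
    nlinarith [e1, e2, e3, e4]

set_option maxHeartbeats 1000000 in
lemma final (n r x y s : ℝ) (hn2 : 2 ≤ n) (hr : 3 ≤ r) (hnr : n ≤ 4*(r - 9/8)^2)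
    (h1 : x = s + 2*y) (h2 : x^2 ≤ n*s) (h3 : 3*s ≤ (n+2)*y) (hs : 0 ≤ s) (hy : 0 ≤ y) :
    4*(r-2)*(n+r)*x + (r-2)*(r-3)*x^2 - (n+r)*(7*r-17-n)*y
      ≤ 4*(r-2)*(n+r)*(n*(n+2)/(n+8)) + (r-2)*(r-3)*(n*(n+2)/(n+8))^2
        - (n+r)*(7*r-17-n)*(3*n*(n+2)/(n+8)^2) := by
  have hm : (0:ℝ) < n+8 := by linarith
  have hn0 : (0:ℝ) < n := by linarith
  have hr2 : (0:ℝ) ≤ r - 2 := by linarith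
  have hr3 : (0:ℝ) ≤ r - 3 := by linarith
  have hnr0 : (0:ℝ) < n + r := by linarith
  have hx0 : 0 ≤ x := by linarith
  have hv : 0 ≤ (n+8)*y - 3*x := by linarith
  have e1 : (n+8)*x^2 ≤ (n+8)*(n*s) := mul_le_mul_of_nonneg_left h2 hm.le
  have hsn : n*s = n*x - 2*n*y := by
    have hxs : s = x - 2*y := by linarith
    rw [hxs]; ring
  have e2 : n*((n+8)*s) ≤ n*((n+2)*x) := by
    apply mul_le_mul_of_nonneg_left _ hn0.le
    linarith [hsn, hv, h1]
  have hq : (n+8)*x^2 ≤ n*(n+2)*x := by nlinarith [e1, e2]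
  have hu : 0 ≤ n*(n+2) - (n+8)*x := by
    rcases eq_or_lt_of_le hx0 with h|h
    · nlinarith [h]
    · have h' : ((n+8)*x)*x ≤ (n*(n+2))*x := by nlinarith [hq]
      have := le_of_mul_le_mul_right h' h
      linarith
  set P : ℝ := 4*(r-2)*(n+r)*(n*(n+2))*(n+8) + (r-2)*(r-3)*n^2*(n+2)^2
      - 3*(n+r)*(7*r-17-n)*(n*(n+2)) with hP
  have hgoal : 4*(r-2)*(n+r)*(n*(n+2)/(n+8)) + (r-2)*(r-3)*(n*(n+2)/(n+8))^2
      - (n+r)*(7*r-17-n)*(3*n*(n+2)/(n+8)^2) = P/(n+8)^2 := by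
    rw [hP]; field_simp
  rw [hgoal, le_div_iff₀ (by positivity)]
  rcases le_or_gt (n - 7*r + 17) 0 with hc | hc
  · have hbr : 0 ≤ 4*r*n+11*r-5*n-13 := by
      nlinarith [mul_nonneg hr3 (by linarith : (0:ℝ) ≤ n - 2)]
    have t1 : 0 ≤ (n+8)^2 * ((n*(n+2) - (n+8)*x) * ((r-2)*(r-3)*(n*(n+2)+(n+8)*x)
        + (n+r)*(4*r*n+11*r-5*n-13))) := by
      apply mul_nonneg (by positivity)
      apply mul_nonneg hu
      have b1 : 0 ≤ (r-2)*(r-3)*(n*(n+2)+(n+8)*x) :=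
        mul_nonneg (mul_nonneg hr2 hr3) (by nlinarith)
      have b2 : 0 ≤ (n+r)*(4*r*n+11*r-5*n-13) := mul_nonneg hnr0.le hbr
      linarith
    have t2 : 0 ≤ (n+8)^3 * ((-((n+r)*(n-7*r+17))) * ((n+8)*y - 3*x)) := by
      apply mul_nonneg (by positivity)
      apply mul_nonneg _ hv
      nlinarith [hnr0, hc]
    have key : 0 ≤ (n+8)^2 * (P - (4*(r-2)*(n+r)*x + (r-2)*(r-3)*x^2
        - (n+r)*(7*r-17-n)*y) * (n+8)^2) := by
      rw [hP]; linarith [t1, t2]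
    have := cancel (by positivity : (0:ℝ) < (n+8)^2) key
    linarith
  · have hw : 0 ≤ n*x - x^2 - 2*n*y := by nlinarith [h2, h1]
    have hF : 0 ≤ -n^3 + (4*r^2-6*r-5)*n^2 + (23*r^2-33*r-12)*n + (36*r^2 - 60*r) :=
      Fnn n r hn2 hr hnr
    have t1 : 0 ≤ (2*n*(n+8)*(4*(r-2)*(n+r)) + 2*n^2*(n+2)*((r-2)*(r-3))
        + 6*n*((n+r)*(n-7*r+17))) * (n*(n+2) - (n+8)*x)^2 := by
      apply mul_nonneg _ (sq_nonneg _)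
      have p1 : 0 ≤ 2*n*(n+8)*(4*(r-2)*(n+r)) :=
        mul_nonneg (by positivity) (mul_nonneg (by linarith) hnr0.le)
      have p2 : 0 ≤ 2*n^2*(n+2)*((r-2)*(r-3)) :=
        mul_nonneg (by positivity) (mul_nonneg hr2 hr3)
      have p3 : 0 ≤ 6*n*((n+r)*(n-7*r+17)) :=
        mul_nonneg (by positivity) (mul_nonneg hnr0.le hc.le)
      linarith
    have t2 : 0 ≤ (n*(n+8)*(-n^3 + (4*r^2-6*r-5)*n^2 + (23*r^2-33*r-12)*n
        + (36*r^2 - 60*r))) * ((n*(n+2) - (n+8)*x)*x) :=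
      mul_nonneg (mul_nonneg (by positivity) hF) (mul_nonneg hu hx0)
    have t3 : 0 ≤ (n*(n+2)*(n+8)^2) * (((n+r)*(n-7*r+17)) * (n*x - x^2 - 2*n*y)) := by
      apply mul_nonneg (by positivity)
      exact mul_nonneg (mul_nonneg hnr0.le hc.le) hw
    have key : 0 ≤ (2*n^2*(n+2)) * (P - (4*(r-2)*(n+r)*x + (r-2)*(r-3)*x^2
        - (n+r)*(7*r-17-n)*y) * (n+8)^2) := by
      rw [hP]; linarith [t1, t2, t3]
    have := cancel (by positivity : (0:ℝ) < 2*n^2*(n+2)) key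
    linarith

end SfunAux

/-- for `r ≥ 3` and `2 ≤ N ≤ 4(r − 9/8)²`, every one-loop fixed
point `λ` satisfies `S_{N,r}(a₀(λ), ‖λ‖²) ≤ S_{N,r}(ρ_N⁺, 3N(N+2)/(N+8)²)`:
the average of the squared one-loop anomalous dimensions of rank-`r` composite
operators is maximized by the `O(N)` fixed point. -/

theorem Sfun_maximized_by_ON {N r : ℕ} (hr : 3 ≤ r) (hN : 2 ≤ N)
    (hNr : (N : ℝ) ≤ 4 * ((r : ℝ) - 9 / 8) ^ 2)
    (A : (Fin 4 → Fin N) → ℝ) (hA : IsSym4 A) (hfp : IsFixedPoint A) :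
    Sfun N r (a0 A) (sqnorm A) ≤
      Sfun N r ((N : ℝ) * ((N : ℝ) + 2) / ((N : ℝ) + 8))
        (3 * (N : ℝ) * ((N : ℝ) + 2) / ((N : ℝ) + 8) ^ 2) := by
  have hs0 : (0:ℝ) ≤ ∑ i, ∑ j, (tmat A i j)^2 :=
    Finset.sum_nonneg fun i _ => Finset.sum_nonneg fun j _ => sq_nonneg _
  have hy0 : 0 ≤ sqnorm A := by
    rw [sqnorm]
    exact Finset.sum_nonneg fun i _ => Finset.sum_nonneg fun j _ =>
      Finset.sum_nonneg fun k _ => Finset.sum_nonneg fun l _ => sq_nonneg _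
  have hn2 : (2:ℝ) ≤ (N:ℝ) := by exact_mod_cast hN
  have hr' : (3:ℝ) ≤ (r:ℝ) := by exact_mod_cast hr
  have h1 := SfunAux.trace_identity hA hfp
  have h2 := SfunAux.cs_bound (A := A)
  have h3 := SfunAux.trace_bound hA
  simp only [Sfun]
  exact SfunAux.final (N:ℝ) (r:ℝ) (a0 A) (sqnorm A) (∑ i, ∑ j, (tmat A i j)^2)
    hn2 hr' hNr h1 h2 (by linarith [h3]) hs0 hy0
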